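/- If C ⊆ F_q^{m×n} (m ≤ n) is a rank-metric code with minimum rank distance d (i.e., rank(A−B) ≥ d for all distinct A, B ∈ C), then |C| ≤ q^{(m−d+1)n} (Singleton-type bound for rank-metric codes). -/

import Mathlib

/-- A matrix whose rows of index `< k` vanish has rank at most `m - k`. -/
theorem rank_le_of_zero_rows {F : Type*} [Field F] {m n k : ℕ} (hkm : k ≤ m)
    (M : Matrix (Fin m) (Fin n) F) (h : ∀ i : Fin m, i.val < k → M i = 0) :
    M.rank ≤ m - k := by
  classical
  rw [Matrix.rank_eq_finrank_span_row]
  set s : Finset (Fin n → F) := (Finset.univ.filter (fun i : Fin m => k ≤ i.val)).image M with hs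
  have hsub : Submodule.span F (Set.range M) ≤ Submodule.span F (s : Set (Fin n → F)) := by
    apply Submodule.span_le.mpr
    rintro _ ⟨i, rfl⟩
    by_cases hi : i.val < k
    · rw [h i hi]; exact Submodule.zero_mem _
    · exact Submodule.subset_span (by
        simp only [hs, Finset.coe_image, Set.mem_image, Finset.mem_coe, Finset.mem_filter,
          Finset.mem_univ, true_and]
        exact Finset.mem_image.mpr ⟨i, Finset.mem_filter.mpr ⟨Finset.mem_univ _, le_of_not_gt hi⟩, rfl⟩)
  calc Module.finrank F ↥(Submodule.span F (Set.range M))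
      ≤ Module.finrank F ↥(Submodule.span F (s : Set (Fin n → F))) := Submodule.finrank_mono hsub
    _ ≤ s.card := finrank_span_finset_le_card _
    _ ≤ (Finset.univ.filter (fun i : Fin m => k ≤ i.val)).card := Finset.card_image_le
    _ ≤ m - k := by
        simp only [not_lt.symm]
        rw [Finset.filter_not, Finset.card_sdiff_of_subset (Finset.filter_subset _ _), Finset.card_univ,
          Fintype.card_fin, ← Fintype.card_subtype, Fintype.card_fin_lt_of_le hkm]
        omega

/-- Singleton-type bound for rank-metric codes: if `C ⊆ F_q^{m×n}` (`m ≤ n`) has minimum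
rank distance at least `d`, then `|C| ≤ q^{(m−d+1)n}`. -/
theorem rank_metric_singleton_bound (F : Type*) [Field F] [Fintype F] (q m n d : ℕ)
    (hq : Fintype.card F = q) (hmn : m ≤ n) (hd : 1 ≤ d) (hdm : d ≤ m)
    (C : Finset (Matrix (Fin m) (Fin n) F))
    (hdist : ∀ A ∈ C, ∀ B ∈ C, A ≠ B → d ≤ (A - B).rank) :
    C.card ≤ q ^ ((m - d + 1) * n) := by
  classical
  set k := m - d + 1 with hk
  have hkm : k ≤ m := by omega
  -- project to the first k rows
  set f : Matrix (Fin m) (Fin n) F → Matrix (Fin k) (Fin n) F :=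
    fun A => fun i j => A (Fin.castLE hkm i) j with hf
  have hinj : Set.InjOn f C := by
    intro A hA B hB hAB
    by_contra hne
    have hrank : (A - B).rank ≤ m - k := by
      apply rank_le_of_zero_rows hkm
      intro i hi
      funext j
      have := congrFun (congrFun hAB ⟨i.val, hi⟩) j
      simp only [hf] at this
      have hcast : Fin.castLE hkm ⟨i.val, hi⟩ = i := rfl
      rw [hcast] at this
      simp [Matrix.sub_apply, this]
    have := hdist A hA B hB hne
    omega
  calc C.card ≤ Fintype.card (Matrix (Fin k) (Fin n) F) := by
        have := Finset.card_le_card_of_injOn f (fun a _ => Finset.mem_univ (f a)) hinj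
        simpa using this
    _ = q ^ (k * n) := by
        have : Fintype.card (Matrix (Fin k) (Fin n) F) = Fintype.card F ^ (k * n) := by
          rw [Fintype.card_congr ((Matrix.of (m := Fin k) (n := Fin n) (α := F)).symm : Matrix (Fin k) (Fin n) F ≃ (Fin k → Fin n → F))]
          simp only [Fintype.card_fun, Fintype.card_fin]
          rw [← pow_mul, Nat.mul_comm]
        rw [this, hq]
    _ = q ^ ((m - d + 1) * n) := by rw [hk]
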